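/- Every Abelian square factor of the string shuffle_◇(X,Y) (with X, Y over disjoint alphabets not containing ◇) has length divisible by 3, and removing the X-letters, ◇-letters, and Y-letters respectively from it yields three strings of equal length. -/

import Mathlib

/-- A string is an Abelian square. -/
def IsAbSquare {α : Type*} (W : List α) : Prop :=
  ∃ U V : List α, W = U ++ V ∧ U.length = V.length ∧ U.Perm V

/-- shuffle_◇(X,Y) = X[1]◇Y[1]X[2]◇Y[2]⋯ for equal-length X, Y. -/
def shuffle {α : Type*} (d : α) (X Y : List α) : List α :=
  (List.zipWith (fun a b => [a, d, b]) X Y).flatten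

lemma shuffle_cons {α : Type*} (d x y : α) (X Y : List α) :
    shuffle d (x :: X) (y :: Y) = x :: d :: y :: shuffle d X Y := rfl

lemma shuffle_length {α : Type*} (d : α) :
    ∀ X Y : List α, X.length = Y.length → (shuffle d X Y).length = 3 * X.length := by
  intro X
  induction X with
  | nil => intro Y h; match Y, h with | [], _ => simp [shuffle]
  | cons x X ih =>
    intro Y h
    match Y, h with
    | y :: Y, h =>
      have h' : X.length = Y.length := by simpa using h
      rw [shuffle_cons]
      simp [ih Y h']
      ring

lemma cnt {α : Type*} (d : α) (p : α → Bool) (o : ℕ) (ho : o ≤ 2) :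
    ∀ X Y : List α, X.length = Y.length →
    (∀ a ∈ X, p a = decide (o = 2)) → p d = decide (o = 1) →
    (∀ b ∈ Y, p b = decide (o = 0)) →
    ∀ k, k ≤ 3 * X.length →
    (((shuffle d X Y).take k).filter p).length = (k + o) / 3 := by
  intro X
  induction X with
  | nil =>
    intro Y h _ _ _ k hk
    match Y, h with
    | [], _ =>
      simp at hk
      subst hk
      simp [shuffle]
      omega
  | cons x X ih =>
    intro Y h hX hd hY k hk
    match Y, h with
    | y :: Y, h =>
      have h' : X.length = Y.length := by simpa using h
      have hx : p x = decide (o = 2) := hX x (by simp)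
      have hy : p y = decide (o = 0) := hY y (by simp)
      rw [shuffle_cons]
      match k with
      | 0 => simp; omega
      | 1 =>
        simp [List.filter, hx]
        interval_cases o <;> simp
      | 2 =>
        simp [List.filter, hx, hd]
        interval_cases o <;> simp
      | (k + 3) =>
        have hk' : k ≤ 3 * X.length := by simp at hk; omega
        have := ih Y h' (fun a ha => hX a (by simp [ha])) hd
          (fun b hb => hY b (by simp [hb])) k hk'
        simp only [List.take_succ_cons, List.filter_cons, hx, hd, hy]
        interval_cases o <;> simp_all <;> omega

lemma mod3_cases (n : ℕ) : n % 3 = 0 ∨ n % 3 = 1 ∨ n % 3 = 2 := by omega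

lemma mod3_succ (i a : ℕ) (h : i % 3 = a) : (i+1) % 3 = (a+1) % 3 := by omega

lemma grp (c : ℕ) (i u a b b' : ℕ)
    (hiu : (i % 3 + c = 2 ∧ u % 3 = 1) ∨ ((i+1) % 3 + c = 2 ∧ u % 3 = 2))
    (h1 : a = (i+c)/3) (h2 : a+b = (i+u+c)/3) (h3 : a+b+b' = (i+u+u+c)/3)
    (hb : b = b') : False := by
  have hc : c = 0 ∨ c = 1 ∨ c = 2 := by rcases hiu with ⟨h, _⟩ | ⟨h, _⟩ <;> omega
  obtain ⟨q, r, hr, rfl⟩ : ∃ q r, (r = 0 ∨ r = 1 ∨ r = 2) ∧ i = 3*q + r :=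
    ⟨i/3, i%3, mod3_cases i, by omega⟩
  obtain ⟨p, e, he, rfl⟩ : ∃ p e, (e = 1 ∨ e = 2) ∧ u = 3*p + e := by
    refine ⟨u/3, u%3, ?_, by omega⟩
    rcases hiu with ⟨_, h⟩ | ⟨_, h⟩ <;> omega
  rcases hc with rfl | rfl | rfl <;> rcases hr with rfl | rfl | rfl <;>
    rcases he with rfl | rfl <;>
    rcases hiu with ⟨hA, hB⟩ | ⟨hA, hB⟩ <;> omega

lemma step2 (c i u a b b' : ℕ) (hu : u % 3 = 0)
    (h1 : a = (i+c)/3) (h2 : a+b = (i+u+c)/3) (h3 : a+b+b' = (i+u+u+c)/3) :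
    b = u/3 ∧ b' = u/3 := by
  omega

lemma absq_arith (i u sx ux wx sd ud wd sy uy wy : ℕ)
    (h1 : sx = (i+2)/3) (h2 : sx+ux = (i+u+2)/3) (h3 : sx+ux+wx = (i+u+u+2)/3)
    (h4 : sd = (i+1)/3) (h5 : sd+ud = (i+u+1)/3) (h6 : sd+ud+wd = (i+u+u+1)/3)
    (h7 : sy = i/3) (h8 : sy+uy = (i+u)/3) (h9 : sy+uy+wy = (i+u+u)/3)
    (px : ux = wx) (pd : ud = wd) (py : uy = wy) :
    3 ∣ (u+u) ∧ ux+wx = ud+wd ∧ uy+wy = ud+wd := by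
  have hu : u % 3 = 0 := by
    rcases mod3_cases u with h | h | h
    · exact h
    · exfalso
      rcases mod3_cases i with hr | hr | hr
      · exact grp 2 i u sx ux wx (Or.inl ⟨by rw [hr], h⟩) h1 h2 h3 px
      · exact grp 1 i u sd ud wd (Or.inl ⟨by rw [hr], h⟩) h4 h5 h6 pd
      · exact grp 0 i u sy uy wy (Or.inl ⟨by rw [hr], h⟩) h7 h8 h9 py
    · exfalso
      rcases mod3_cases i with hr | hr | hr
      · exact grp 1 i u sd ud wd (Or.inr ⟨by rw [mod3_succ i 0 hr], h⟩) h4 h5 h6 pd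
      · exact grp 0 i u sy uy wy (Or.inr ⟨by rw [mod3_succ i 1 hr], h⟩) h7 h8 h9 py
      · exact grp 2 i u sx ux wx (Or.inr ⟨by rw [mod3_succ i 2 hr], h⟩) h1 h2 h3 px
  obtain ⟨e1, e2⟩ := step2 2 i u sx ux wx hu h1 h2 h3
  obtain ⟨e3, e4⟩ := step2 1 i u sd ud wd hu h4 h5 h6
  obtain ⟨e5, e6⟩ := step2 0 i u sy uy wy hu h7 h8 h9
  clear h1 h2 h3 h4 h5 h6 h7 h8 h9 px pd py
  refine ⟨by omega, by omega, by omega⟩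

/-- Every Abelian-square factor of shuffle_◇(X,Y) (X, Y over disjoint alphabets
avoiding ◇) has length divisible by 3, and its X-letters, ◇-letters and Y-letters
form three strings of equal length. -/
theorem shuffle_absquare_length {α : Type*} [DecidableEq α] (d : α) (X Y V : List α)
    (hlen : X.length = Y.length)
    (hdisj : ∀ a ∈ X, ∀ b ∈ Y, a ≠ b) (hdX : d ∉ X) (hdY : d ∉ Y)
    (hV : V.IsInfix (shuffle d X Y)) (hsq : IsAbSquare V) :
    3 ∣ V.length ∧
    (V.filter fun c => decide (c ∈ X)).length = (V.filter fun c => decide (c = d)).length ∧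
    (V.filter fun c => decide (c ∈ Y)).length = (V.filter fun c => decide (c = d)).length := by
  obtain ⟨s, t, hst⟩ := hV
  obtain ⟨U, W, hUW, hlenUW, hperm⟩ := hsq
  set S := shuffle d X Y with hS
  set pX : α → Bool := fun c => decide (c ∈ X) with hpX
  set pd : α → Bool := fun c => decide (c = d) with hpd
  set pY : α → Bool := fun c => decide (c ∈ Y) with hpY
  have hSlen : S.length = 3 * X.length := shuffle_length d X Y hlen
  have htot : s.length + (U.length + W.length) + t.length = 3 * X.length := by
    have := congrArg List.length hst
    simp [hSlen, hUW] at this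
    omega
  -- predicate facts
  have hXX : ∀ a ∈ X, pX a = decide ((2:ℕ) = 2) := by intro a ha; simp [hpX, ha]
  have hXd : pX d = decide ((2:ℕ) = 1) := by simp [hpX, hdX]
  have hXY : ∀ b ∈ Y, pX b = decide ((2:ℕ) = 0) := by
    intro b hb; simp [hpX]; intro hbX; exact hdisj b hbX b hb rfl
  have hdXh : ∀ a ∈ X, pd a = decide ((1:ℕ) = 2) := by
    intro a ha; simp [hpd]; rintro rfl; exact hdX ha
  have hdd : pd d = decide ((1:ℕ) = 1) := by simp [hpd]
  have hdY' : ∀ b ∈ Y, pd b = decide ((1:ℕ) = 0) := by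
    intro b hb; simp [hpd]; rintro rfl; exact hdY hb
  have hYX : ∀ a ∈ X, pY a = decide ((0:ℕ) = 2) := by
    intro a ha; simp [hpY]; intro hbY; exact hdisj a ha a hbY rfl
  have hYd : pY d = decide ((0:ℕ) = 1) := by simp [hpY, hdY]
  have hYY : ∀ b ∈ Y, pY b = decide ((0:ℕ) = 0) := by intro b hb; simp [hpY, hb]
  -- prefixes
  have h1 : S.take s.length = s := by
    rw [← hst, List.append_assoc]; exact List.take_left
  have h2 : S.take (s ++ U).length = s ++ U := by
    rw [← hst, hUW]
    rw [show s ++ (U ++ W) ++ t = (s ++ U) ++ (W ++ t) by simp]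
    exact List.take_left
  have h3 : S.take (s ++ U ++ W).length = s ++ U ++ W := by
    rw [← hst, hUW]
    rw [show s ++ (U ++ W) ++ t = (s ++ U ++ W) ++ t by simp]
    exact List.take_left
  have key : ∀ (p : α → Bool) (o : ℕ), o ≤ 2 →
      (∀ a ∈ X, p a = decide (o = 2)) → p d = decide (o = 1) →
      (∀ b ∈ Y, p b = decide (o = 0)) →
      (s.filter p).length = (s.length + o) / 3 ∧
      (s.filter p).length + (U.filter p).length = (s.length + U.length + o) / 3 ∧
      (s.filter p).length + (U.filter p).length + (W.filter p).length
        = (s.length + U.length + W.length + o) / 3 := by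
    intro p o ho hpXh hpdh hpYh
    refine ⟨?_, ?_, ?_⟩
    · have := cnt d p o ho X Y hlen hpXh hpdh hpYh s.length (by omega)
      rwa [h1] at this
    · have := cnt d p o ho X Y hlen hpXh hpdh hpYh (s ++ U).length (by simp; omega)
      rw [h2] at this
      simpa [List.length_append] using this
    · have := cnt d p o ho X Y hlen hpXh hpdh hpYh (s ++ U ++ W).length (by simp; omega)
      rw [h3] at this
      simpa [List.length_append, add_assoc] using this
  obtain ⟨eX1, eX2, eX3⟩ := key pX 2 (by norm_num) hXX hXd hXY
  obtain ⟨ed1, ed2, ed3⟩ := key pd 1 (by norm_num) hdXh hdd hdY'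
  obtain ⟨eY1, eY2, eY3⟩ := key pY 0 (by norm_num) hYX hYd hYY
  -- perm equalities
  have pfX : (U.filter pX).length = (W.filter pX).length := (hperm.filter pX).length_eq
  have pfd : (U.filter pd).length = (W.filter pd).length := (hperm.filter pd).length_eq
  have pfY : (U.filter pY).length = (W.filter pY).length := (hperm.filter pY).length_eq
  have hVX : (V.filter pX).length = (U.filter pX).length + (W.filter pX).length := by
    rw [hUW, List.filter_append, List.length_append]
  have hVd : (V.filter pd).length = (U.filter pd).length + (W.filter pd).length := by
    rw [hUW, List.filter_append, List.length_append]
  have hVY : (V.filter pY).length = (U.filter pY).length + (W.filter pY).length := by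
    rw [hUW, List.filter_append, List.length_append]
  have hVlen : V.length = U.length + W.length := by rw [hUW, List.length_append]
  rw [← hlenUW] at eX3 ed3 eY3 hVlen
  obtain ⟨g1, g2, g3⟩ := absq_arith s.length U.length _ _ _ _ _ _ _ _ _
    eX1 eX2 eX3 ed1 ed2 ed3 eY1 eY2 eY3 pfX pfd pfY
  refine ⟨by rw [hVlen]; exact g1, by rw [hVX, hVd]; exact g2, by rw [hVY, hVd]; exact g3⟩
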